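/- arXiv:1605.08636 — 2 statements merged into one kernel-verified Lean document; each statement's English description precedes it below -/
import Mathlib

section
/- Consider linear predictors f_w(x) = w·x with w ∼ N(0, σ_π² I_d), inputs x ∼ N(0, σ_x² I_d), labels y = w*·x + ε with ε ∼ N(0, σ_ε²), and the squared loss ℓ(w,x,y) = (w·x − y)². Then the random variable V = E_{x,y}[ℓ(w,x,y)] − ℓ(w,x,y) is sub-gamma with scale c = 2σ_x²σ_π² and, at λ = 1, variance factor s² = 2[σ_x²(σ_π²d + ‖w*‖²) + σ_ε²(1−c)]; that is, ln E[exp(V)] ≤ s²/(2(1−c)) provided c < 1. -/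
open MeasureTheory ProbabilityTheory Real
open scoped NNReal ENNReal

lemma integrable_rexp_quadratic {b : ℝ} (hb : b < 0) (c d : ℝ) :
    Integrable (fun x : ℝ => Real.exp (b*x^2 + c*x + d)) := by
  have h : ∀ x : ℝ, Real.exp (b*x^2 + c*x + d)
      = Real.exp (-(-b) * (x + c/(2*b))^2) * Real.exp (d - c^2/(4*b)) := by
    intro x
    rw [← Real.exp_add]
    congr 1
    have hb' : b ≠ 0 := ne_of_lt hb
    field_simp
    ring
  simp_rw [h]
  exact ((integrable_exp_neg_mul_sq (by linarith)).comp_add_right _).mul_const _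

lemma integral_rexp_quadratic {b : ℝ} (hb : b < 0) (c d : ℝ) :
    ∫ x : ℝ, Real.exp (b*x^2 + c*x + d)
      = Real.sqrt (π / (-b)) * Real.exp (d - c^2/(4*b)) := by
  have h : ∀ x : ℝ, Real.exp (b*x^2 + c*x + d)
      = Real.exp (-(-b) * (x + c/(2*b))^2) * Real.exp (d - c^2/(4*b)) := by
    intro x
    rw [← Real.exp_add]
    congr 1
    have hb' : b ≠ 0 := ne_of_lt hb
    field_simp
    ring
  simp_rw [h, integral_mul_const]
  rw [integral_add_right_eq_self (fun x : ℝ => Real.exp (-(-b) * x^2)) (c/(2*b)),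
    integral_gaussian]

lemma gauss_integral_eq {v : ℝ≥0} (hv : v ≠ 0) (g : ℝ → ℝ) :
    ∫ x, g x ∂(gaussianReal 0 v)
      = ∫ x, gaussianPDFReal 0 v x * g x := by
  rw [gaussianReal_of_var_ne_zero _ hv, gaussianPDF_def]
  have h : (fun x => ENNReal.ofReal (gaussianPDFReal 0 v x))
      = fun x => ((Real.toNNReal (gaussianPDFReal 0 v x) : ℝ≥0) : ℝ≥0∞) := rfl
  rw [h, integral_withDensity_eq_integral_smul
    ((measurable_gaussianPDFReal 0 v).real_toNNReal) g]
  refine integral_congr_ae (Filter.Eventually.of_forall fun x => ?_)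
  simp [NNReal.smul_def, Real.coe_toNNReal _ (gaussianPDFReal_nonneg 0 v x)]

lemma gauss_integrable_iff {v : ℝ≥0} (hv : v ≠ 0) (g : ℝ → ℝ) :
    Integrable g (gaussianReal 0 v)
      ↔ Integrable (fun x => gaussianPDFReal 0 v x * g x) volume := by
  rw [gaussianReal_of_var_ne_zero _ hv, gaussianPDF_def]
  have h : (fun x => ENNReal.ofReal (gaussianPDFReal 0 v x))
      = fun x => ((Real.toNNReal (gaussianPDFReal 0 v x) : ℝ≥0) : ℝ≥0∞) := rfl
  rw [h, integrable_withDensity_iff_integrable_smul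
    ((measurable_gaussianPDFReal 0 v).real_toNNReal)]
  constructor <;> intro hh <;> refine hh.congr (Filter.Eventually.of_forall fun x => ?_) <;>
    simp [NNReal.smul_def, Real.coe_toNNReal _ (gaussianPDFReal_nonneg 0 v x)]

lemma integrable_sq_exp_neg_mul_sq {b : ℝ} (hb : 0 < b) :
    Integrable (fun x : ℝ => x^2 * Real.exp (-b*x^2)) := by
  have := integrable_rpow_mul_exp_neg_mul_sq hb (s := ((2:ℕ):ℝ)) (by norm_num)
  refine this.congr (Filter.Eventually.of_forall fun x => ?_)
  norm_num [Real.rpow_natCast]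

lemma tendsto_mul_exp_neg_mul_sq_atTop {b : ℝ} (hb : 0 < b) :
    Filter.Tendsto (fun x : ℝ => x * Real.exp (-b*x^2)) Filter.atTop (nhds 0) := by
  have h := rpow_mul_exp_neg_mul_sq_isLittleO_exp_neg hb 1
  have h2 : (fun x : ℝ => x * Real.exp (-b*x^2))
      =o[Filter.atTop] fun x : ℝ => Real.exp (-(1/2) * x) := by
    refine h.congr' (Filter.Eventually.of_forall fun x => ?_) (Filter.Eventually.of_forall fun x => rfl)
    norm_num [Real.rpow_one]
  have h3 : Filter.Tendsto (fun x : ℝ => x/2) Filter.atTop Filter.atTop :=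
    Filter.tendsto_id.atTop_div_const two_pos
  have hg := (Real.tendsto_exp_neg_atTop_nhds_zero).comp h3
  refine h2.trans_tendsto (hg.congr fun x => ?_)
  simp only [Function.comp_def]
  congr 1
  ring

lemma hasDerivAt_mul_exp_neg_mul_sq (b x : ℝ) :
    HasDerivAt (fun x : ℝ => x * Real.exp (-b*x^2))
      ((1 - 2*b*x^2) * Real.exp (-b*x^2)) x := by
  have h1 : HasDerivAt (fun x : ℝ => -b*x^2) (-b*(2*x)) x := by
    simpa using ((hasDerivAt_pow 2 x).const_mul (-b))
  have h2 : HasDerivAt (fun y : ℝ => y * Real.exp (-b*y^2)) _ x := (hasDerivAt_id' x).mul h1.exp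
  convert h2 using 1
  ring

lemma integral_sq_exp_neg_mul_sq {b : ℝ} (hb : 0 < b) :
    ∫ x : ℝ, x^2 * Real.exp (-b*x^2) = Real.sqrt (π / b) / (2*b) := by
  set g : ℝ → ℝ := fun x => x * Real.exp (-b*x^2) with hg
  set h : ℝ → ℝ := fun x => (1 - 2*b*x^2) * Real.exp (-b*x^2) with hh
  have hint : Integrable h := by
    have : h = fun x => Real.exp (-b*x^2) - (2*b) * (x^2 * Real.exp (-b*x^2)) := by
      funext x; simp only [hh]; ring
    rw [this]
    exact (integrable_exp_neg_mul_sq hb).sub ((integrable_sq_exp_neg_mul_sq hb).const_mul _)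
  have hderiv : ∀ x : ℝ, HasDerivAt g (h x) x := fun x => hasDerivAt_mul_exp_neg_mul_sq b x
  have htop : Filter.Tendsto g Filter.atTop (nhds 0) := tendsto_mul_exp_neg_mul_sq_atTop hb
  have hbot : Filter.Tendsto g Filter.atBot (nhds 0) := by
    have h4 := ((tendsto_mul_exp_neg_mul_sq_atTop hb).comp Filter.tendsto_neg_atBot_atTop).neg
    rw [neg_zero] at h4
    refine h4.congr fun x => ?_
    have hx : (-x:ℝ)^2 = x^2 := by ring
    simp only [Function.comp_def, hx, hg]
    ring
  have hIoi : ∫ x in Set.Ioi (0:ℝ), h x = 0 - g 0 := by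
    refine integral_Ioi_of_hasDerivAt_of_tendsto ((hderiv 0).continuousAt.continuousWithinAt)
      (fun x _ => hderiv x) hint.integrableOn htop
  have hIic : ∫ x in Set.Iic (0:ℝ), h x = g 0 - 0 := by
    refine integral_Iic_of_hasDerivAt_of_tendsto ((hderiv 0).continuousAt.continuousWithinAt)
      (fun x _ => hderiv x) hint.integrableOn hbot
  have htot : ∫ x : ℝ, h x = 0 := by
    rw [← integral_add_compl measurableSet_Iic hint, Set.compl_Iic, hIic, hIoi]
    simp
  have hsplit : ∫ x : ℝ, h x
      = (∫ x : ℝ, Real.exp (-b*x^2)) - (2*b) * ∫ x : ℝ, x^2 * Real.exp (-b*x^2) := by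
    rw [← integral_const_mul, ← integral_sub (integrable_exp_neg_mul_sq hb)
      ((integrable_sq_exp_neg_mul_sq hb).const_mul _)]
    refine integral_congr_ae (Filter.Eventually.of_forall fun x => ?_)
    simp only [hh]; ring
  rw [htot, integral_gaussian] at hsplit
  have hb' : (2*b) ≠ 0 := by positivity
  field_simp at hsplit ⊢
  linarith

lemma gaussianPDFReal_zero_eq {v : ℝ} (hv : 0 < v) (x : ℝ) :
    gaussianPDFReal 0 v.toNNReal x
      = (Real.sqrt (2*π*v))⁻¹ * Real.exp (-(1/(2*v)) * x^2) := by
  have hco : ((v.toNNReal : ℝ≥0) : ℝ) = v := Real.coe_toNNReal v hv.le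
  simp only [gaussianPDFReal, hco, sub_zero]
  congr 1
  field_simp

lemma toNNReal_ne_zero_of_pos {v : ℝ} (hv : 0 < v) : v.toNNReal ≠ 0 := by
  simp only [ne_eq, Real.toNNReal_eq_zero, not_le]
  exact hv

lemma integrable_id_gaussian {v : ℝ} (hv : 0 < v) :
    Integrable (fun x => x) (gaussianReal 0 v.toNNReal) := by
  rw [gauss_integrable_iff (toNNReal_ne_zero_of_pos hv)]
  have hb : 0 < 1/(2*v) := by positivity
  refine (((integrable_mul_exp_neg_mul_sq hb).const_mul
    ((Real.sqrt (2*π*v))⁻¹)).congr (Filter.Eventually.of_forall fun x => ?_))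
  simp only [gaussianPDFReal_zero_eq hv]
  ring

lemma integral_id_gaussian {v : ℝ} (hv : 0 < v) :
    ∫ x, x ∂(gaussianReal 0 v.toNNReal) = 0 := by
  rw [gauss_integral_eq (toNNReal_ne_zero_of_pos hv)]
  have h := integral_neg_eq_self (μ := volume) (fun x : ℝ => gaussianPDFReal 0 v.toNNReal x * x)
  have heq : ∀ x : ℝ, gaussianPDFReal 0 v.toNNReal (-x) * (-x)
      = -(gaussianPDFReal 0 v.toNNReal x * x) := by
    intro x
    rw [gaussianPDFReal_zero_eq hv, gaussianPDFReal_zero_eq hv]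
    ring_nf
  simp_rw [heq, integral_neg] at h
  linarith

lemma integrable_sq_gaussian {v : ℝ} (hv : 0 < v) :
    Integrable (fun x => x^2) (gaussianReal 0 v.toNNReal) := by
  rw [gauss_integrable_iff (toNNReal_ne_zero_of_pos hv)]
  have hb : 0 < 1/(2*v) := by positivity
  refine (((integrable_sq_exp_neg_mul_sq hb).const_mul
    ((Real.sqrt (2*π*v))⁻¹)).congr (Filter.Eventually.of_forall fun x => ?_))
  simp only [gaussianPDFReal_zero_eq hv]
  ring

lemma integral_sq_gaussian {v : ℝ} (hv : 0 < v) :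
    ∫ x, x^2 ∂(gaussianReal 0 v.toNNReal) = v := by
  rw [gauss_integral_eq (toNNReal_ne_zero_of_pos hv)]
  have hb : 0 < 1/(2*v) := by positivity
  have heq : ∀ x : ℝ, gaussianPDFReal 0 v.toNNReal x * x^2
      = (Real.sqrt (2*π*v))⁻¹ * (x^2 * Real.exp (-(1/(2*v)) * x^2)) := by
    intro x
    rw [gaussianPDFReal_zero_eq hv]
    ring
  simp_rw [heq, integral_const_mul, integral_sq_exp_neg_mul_sq hb]
  have h1 : π / (1/(2*v)) = 2*π*v := by field_simp
  rw [h1]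
  have h2 : (0:ℝ) < Real.sqrt (2*π*v) := Real.sqrt_pos.mpr (by positivity)
  field_simp

lemma exp_sq_pdf_eq {v : ℝ} (hv : 0 < v) {t : ℝ} (a : ℝ) (x : ℝ) :
    gaussianPDFReal 0 v.toNNReal x * Real.exp (t*(x-a)^2)
      = (Real.sqrt (2*π*v))⁻¹
        * Real.exp ((t - 1/(2*v))*x^2 + (-2*t*a)*x + t*a^2) := by
  rw [gaussianPDFReal_zero_eq hv, mul_assoc, ← Real.exp_add]
  congr 2
  ring

lemma integrable_exp_sq_gaussian {v : ℝ} (hv : 0 < v) {t : ℝ} (a : ℝ) (ht : 2*t*v < 1) :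
    Integrable (fun x => Real.exp (t*(x-a)^2)) (gaussianReal 0 v.toNNReal) := by
  rw [gauss_integrable_iff (toNNReal_ne_zero_of_pos hv)]
  have hb : t - 1/(2*v) < 0 := by
    rw [sub_neg]
    rw [lt_div_iff₀ (by positivity : (0:ℝ) < 2*v)]
    linarith
  simp_rw [exp_sq_pdf_eq hv a]
  exact (integrable_rexp_quadratic hb _ _).const_mul _

lemma integral_exp_sq_gaussian {v : ℝ} (hv : 0 < v) {t : ℝ} (a : ℝ) (ht : 2*t*v < 1) :
    ∫ x, Real.exp (t*(x-a)^2) ∂(gaussianReal 0 v.toNNReal)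
      = Real.exp (t*a^2/(1-2*t*v)) / Real.sqrt (1-2*t*v) := by
  rw [gauss_integral_eq (toNNReal_ne_zero_of_pos hv)]
  have hb : t - 1/(2*v) < 0 := by
    rw [sub_neg, lt_div_iff₀ (by positivity : (0:ℝ) < 2*v)]
    linarith
  simp_rw [exp_sq_pdf_eq hv a, integral_const_mul, integral_rexp_quadratic hb]
  have h1tv : (0:ℝ) < 1 - 2*t*v := by linarith
  have hvne : v ≠ 0 := ne_of_gt hv
  have hbne : t - 1/(2*v) ≠ 0 := ne_of_lt hb
  have h1ne : 1 - 2*t*v ≠ 0 := ne_of_gt h1tv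
  have hsq : π / -(t - 1/(2*v)) = (2*π*v) / (1-2*t*v) := by
    rw [div_eq_div_iff (by linarith : -(t - 1/(2*v)) ≠ 0) h1ne]
    field_simp
    ring
  have h8 : (-4 + t*v*8 : ℝ) ≠ 0 := by
    intro h
    apply h1ne
    linarith
  have hexp : t*a^2 - (-2*t*a)^2/(4*(t-1/(2*v))) = t*a^2/(1-2*t*v) := by
    field_simp [h8]
    have h9 : (t*2*v - 1 : ℝ) ≠ 0 := by intro h; apply h1ne; linarith
    rw [eq_div_iff (by intro h; apply h1ne; linarith)]
    field_simp
    ring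
  rw [hsq, hexp, Real.sqrt_div (by positivity : (0:ℝ) ≤ 2*π*v)]
  have hs : Real.sqrt (2*π*v) ≠ 0 := ne_of_gt (Real.sqrt_pos.mpr (by positivity))
  field_simp

section Pi

variable {d : ℕ} {μ : Measure ℝ} [IsProbabilityMeasure μ]

lemma pi_integrable_prod {f : Fin d → ℝ → ℝ} (hf : ∀ i, Integrable (f i) μ) :
    Integrable (fun x : Fin d → ℝ => ∏ i, f i (x i)) (Measure.pi fun _ => μ) := by
  letI : MeasureSpace ℝ := ⟨μ⟩
  haveI : SigmaFinite (volume : Measure ℝ) := (inferInstance : SigmaFinite μ)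
  exact Integrable.fintype_prod (f := f) hf

lemma pi_integral_prod (f : Fin d → ℝ → ℝ) :
    ∫ x : Fin d → ℝ, ∏ i, f i (x i) ∂(Measure.pi fun _ => μ)
      = ∏ i, ∫ x, f i x ∂μ := by
  letI : MeasureSpace ℝ := ⟨μ⟩
  haveI : SigmaFinite (volume : Measure ℝ) := (inferInstance : SigmaFinite μ)
  exact integral_fintype_prod_eq_prod f

lemma prod_upd1 (i : Fin d) (f : ℝ → ℝ) (x : Fin d → ℝ) :
    ∏ k, (Function.update (fun _ : Fin d => (fun _ : ℝ => (1:ℝ))) i f) k (x k)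
      = f (x i) := by
  refine Finset.prod_eq_single_of_mem i (Finset.mem_univ i) (fun k _ hk => ?_) |>.trans ?_
  · rw [Function.update_of_ne hk]
  · rw [Function.update_self]

lemma prod_upd2 {i j : Fin d} (hij : i ≠ j) (f g : ℝ → ℝ) (x : Fin d → ℝ) :
    ∏ k, (Function.update (Function.update (fun _ : Fin d => (fun _ : ℝ => (1:ℝ))) i f) j g) k (x k)
      = f (x i) * g (x j) := by
  rw [← Finset.mul_prod_erase Finset.univ _ (Finset.mem_univ j), Function.update_self]
  rw [Finset.prod_eq_single_of_mem i (Finset.mem_erase.mpr ⟨hij, Finset.mem_univ i⟩)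
    (fun k hk hki => ?_)]
  · rw [Function.update_of_ne hij, Function.update_self]
    ring
  · rw [Function.update_of_ne (Finset.mem_erase.mp hk).1, Function.update_of_ne hki]

lemma pi_integrable_coord (i : Fin d) {f : ℝ → ℝ} (hf : Integrable f μ) :
    Integrable (fun x : Fin d → ℝ => f (x i)) (Measure.pi fun _ => μ) := by
  have h := pi_integrable_prod (μ := μ) (f := Function.update (fun _ : Fin d => (fun _ : ℝ => (1:ℝ))) i f)
    (fun k => ?_)
  · exact h.congr (Filter.Eventually.of_forall fun x => prod_upd1 i f x)
  · rcases eq_or_ne k i with rfl | hk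
    · rwa [Function.update_self]
    · rw [Function.update_of_ne hk]
      exact integrable_const 1

lemma pi_integral_coord (i : Fin d) (f : ℝ → ℝ) :
    ∫ x : Fin d → ℝ, f (x i) ∂(Measure.pi fun _ => μ) = ∫ x, f x ∂μ := by
  rw [show (fun x : Fin d → ℝ => f (x i))
    = fun x => ∏ k, (Function.update (fun _ : Fin d => (fun _ : ℝ => (1:ℝ))) i f) k (x k) from
    funext fun x => (prod_upd1 i f x).symm, pi_integral_prod]
  rw [Finset.prod_eq_single_of_mem i (Finset.mem_univ i) (fun k _ hk => ?_)]
  · rw [Function.update_self]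
  · rw [Function.update_of_ne hk]
    simp

lemma pi_integrable_coord2 {i j : Fin d} (hij : i ≠ j) {f g : ℝ → ℝ}
    (hf : Integrable f μ) (hg : Integrable g μ) :
    Integrable (fun x : Fin d → ℝ => f (x i) * g (x j)) (Measure.pi fun _ => μ) := by
  have h := pi_integrable_prod (μ := μ)
    (f := Function.update (Function.update (fun _ : Fin d => (fun _ : ℝ => (1:ℝ))) i f) j g)
    (fun k => ?_)
  · exact h.congr (Filter.Eventually.of_forall fun x => prod_upd2 hij f g x)
  · rcases eq_or_ne k j with rfl | hkj
    · rwa [Function.update_self]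
    · rw [Function.update_of_ne hkj]
      rcases eq_or_ne k i with rfl | hki
      · rwa [Function.update_self]
      · rw [Function.update_of_ne hki]
        exact integrable_const 1

lemma pi_integral_coord2 {i j : Fin d} (hij : i ≠ j) (f g : ℝ → ℝ) :
    ∫ x : Fin d → ℝ, f (x i) * g (x j) ∂(Measure.pi fun _ => μ)
      = (∫ x, f x ∂μ) * ∫ x, g x ∂μ := by
  rw [show (fun x : Fin d → ℝ => f (x i) * g (x j))
    = fun x => ∏ k, (Function.update (Function.update
        (fun _ : Fin d => (fun _ : ℝ => (1:ℝ))) i f) j g) k (x k) from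
    funext fun x => (prod_upd2 hij f g x).symm, pi_integral_prod]
  rw [← Finset.mul_prod_erase Finset.univ _ (Finset.mem_univ j), Function.update_self]
  rw [Finset.prod_eq_single_of_mem i (Finset.mem_erase.mpr ⟨hij, Finset.mem_univ i⟩)
    (fun k hk hki => ?_)]
  · rw [Function.update_of_ne hij, Function.update_self]
    ring
  · rw [Function.update_of_ne (Finset.mem_erase.mp hk).1, Function.update_of_ne hki]
    simp

end Pi

section SumSq

variable {d : ℕ} {μ : Measure ℝ} [IsProbabilityMeasure μ]

lemma sum_sq_expand (u : Fin d → ℝ) (x : Fin d → ℝ) :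
    (∑ i, u i * x i)^2 = ∑ i, ∑ j, (u i * u j) * (x i * x j) := by
  rw [sq, Finset.sum_mul_sum]
  refine Finset.sum_congr rfl fun i _ => Finset.sum_congr rfl fun j _ => by ring

lemma pi_integrable_term (hi1 : Integrable (fun x : ℝ => x) μ)
    (hi2 : Integrable (fun x : ℝ => x^2) μ) (i j : Fin d) :
    Integrable (fun x : Fin d → ℝ => x i * x j) (Measure.pi fun _ => μ) := by
  rcases eq_or_ne i j with rfl | hij
  · exact (pi_integrable_coord (μ := μ) i hi2).congr
      (Filter.Eventually.of_forall fun x => by simp [pow_two])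
  · exact pi_integrable_coord2 hij hi1 hi1

lemma pi_integral_term (m1 : ∫ x, x ∂μ = 0) {v : ℝ} (m2 : ∫ x, x^2 ∂μ = v) (i j : Fin d) :
    ∫ x : Fin d → ℝ, x i * x j ∂(Measure.pi fun _ => μ) = if i = j then v else 0 := by
  rcases eq_or_ne i j with rfl | hij
  · rw [if_pos rfl, show (fun x : Fin d → ℝ => x i * x i) = fun x => (fun z : ℝ => z^2) (x i)
      from funext fun x => (sq (x i)).symm, pi_integral_coord i (fun z : ℝ => z^2), m2]
  · rw [if_neg hij, show (fun x : Fin d → ℝ => x i * x j)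
      = fun x => (fun z : ℝ => z) (x i) * (fun z : ℝ => z) (x j) from rfl,
      pi_integral_coord2 (μ := μ) hij (fun z : ℝ => z) (fun z : ℝ => z), m1, zero_mul]

lemma pi_integrable_sum_sq (hi1 : Integrable (fun x : ℝ => x) μ)
    (hi2 : Integrable (fun x : ℝ => x^2) μ) (u : Fin d → ℝ) :
    Integrable (fun x : Fin d → ℝ => (∑ i, u i * x i)^2) (Measure.pi fun _ => μ) := by
  simp_rw [sum_sq_expand]
  refine integrable_finset_sum _ fun i _ => integrable_finset_sum _ fun j _ => ?_
  exact (pi_integrable_term hi1 hi2 i j).const_mul _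

lemma pi_integral_sum_sq (hi1 : Integrable (fun x : ℝ => x) μ)
    (hi2 : Integrable (fun x : ℝ => x^2) μ)
    (m1 : ∫ x, x ∂μ = 0) {v : ℝ} (m2 : ∫ x, x^2 ∂μ = v) (u : Fin d → ℝ) :
    ∫ x : Fin d → ℝ, (∑ i, u i * x i)^2 ∂(Measure.pi fun _ => μ)
      = v * ∑ i, (u i)^2 := by
  simp_rw [sum_sq_expand]
  rw [integral_finset_sum _ fun i _ => integrable_finset_sum _ fun j _ =>
    (pi_integrable_term hi1 hi2 i j).const_mul _]
  have : ∀ i : Fin d, ∫ x : Fin d → ℝ, ∑ j, (u i * u j) * (x i * x j) ∂(Measure.pi fun _ => μ)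
      = ∑ j, (u i * u j) * (if i = j then v else 0) := by
    intro i
    rw [integral_finset_sum _ fun j _ => (pi_integrable_term hi1 hi2 i j).const_mul _]
    refine Finset.sum_congr rfl fun j _ => ?_
    rw [integral_const_mul, pi_integral_term m1 m2]
  simp_rw [this, mul_ite, mul_zero]
  rw [Finset.sum_congr rfl fun i _ => Finset.sum_ite_eq Finset.univ i (fun j => u i * u j * v)]
  simp only [Finset.mem_univ, if_pos]
  rw [Finset.mul_sum]
  refine Finset.sum_congr rfl fun i _ => by ring

end SumSq

/-- The centered squared loss of a random linear predictor with Gaussian prior,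
Gaussian inputs and Gaussian label noise is sub-gamma: at `λ = 1`, with
`c = 2σ_x²σ_π² < 1` and `s² = 2[σ_x²(σ_π²d + ‖w*‖²) + σ_ε²(1-c)]`,
`ln E[exp V] ≤ s²/(2(1-c))` where `V = E_{x,y}[ℓ(w,x,y)] - ℓ(w,x,y)`. -/
theorem stmt_10 (d : ℕ) (hd : 0 < d) (σx σπ σε : ℝ)
    (hσx : 0 < σx) (hσπ : 0 < σπ) (hσε : 0 < σε)
    (wstar : Fin d → ℝ)
    (prior : Measure (Fin d → ℝ))
    (hprior : prior = Measure.pi fun _ : Fin d => gaussianReal 0 (Real.toNNReal (σπ ^ 2)))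
    (ν : Measure ((Fin d → ℝ) × ℝ))
    (hν : ν = (Measure.pi fun _ : Fin d => gaussianReal 0 (Real.toNNReal (σx ^ 2))).prod
      (gaussianReal 0 (Real.toNNReal (σε ^ 2))))
    (ℓ : (Fin d → ℝ) → (Fin d → ℝ) × ℝ → ℝ)
    (hℓ : ∀ w q, ℓ w q = ((∑ i, w i * q.1 i) - ((∑ i, wstar i * q.1 i) + q.2)) ^ 2)
    (c s2 : ℝ)
    (hc : c = 2 * σx ^ 2 * σπ ^ 2) (hc1 : c < 1)
    (hs2 : s2 = 2 * (σx ^ 2 * (σπ ^ 2 * d + ∑ i, (wstar i) ^ 2) + σε ^ 2 * (1 - c))) :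
    Real.log (∫ p : (Fin d → ℝ) × ((Fin d → ℝ) × ℝ),
        Real.exp ((∫ q, ℓ p.1 q ∂ν) - ℓ p.1 p.2) ∂(prior.prod ν))
      ≤ s2 / (2 * (1 - c)) := by
  subst hprior hν hc hs2
  have hvx : (0:ℝ) < σx^2 := by positivity
  have hvπ : (0:ℝ) < σπ^2 := by positivity
  have hvε : (0:ℝ) < σε^2 := by positivity
  have ht : 2*(σx^2)*(σπ^2) < 1 := hc1
  have hD : (0:ℝ) < 1 - 2*σx^2*σπ^2 := by linarith [hc1]
  set γx := gaussianReal 0 (Real.toNNReal (σx ^ 2)) with hγx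
  set γπ := gaussianReal 0 (Real.toNNReal (σπ ^ 2)) with hγπ
  set γε := gaussianReal 0 (Real.toNNReal (σε ^ 2)) with hγε
  set πx : Measure (Fin d → ℝ) := Measure.pi fun _ : Fin d => γx with hπx
  set πp : Measure (Fin d → ℝ) := Measure.pi fun _ : Fin d => γπ with hπp
  -- Step B : value of the inner integral
  have key2 : ∀ w : Fin d → ℝ, (∫ q, ℓ w q ∂(πx.prod γε))
      = σx^2 * (∑ i, (w i - wstar i)^2) + σε^2 := by
    intro w
    have hpt : ∀ q : (Fin d → ℝ) × ℝ, ℓ w q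
        = (∑ i, (w i - wstar i) * q.1 i)^2
          + ((-2) * (∑ i, (w i - wstar i) * q.1 i)) * q.2 + q.2^2 := by
      intro q
      have hs : (∑ i, w i * q.1 i) - ∑ i, wstar i * q.1 i
          = ∑ i, (w i - wstar i) * q.1 i := by
        rw [← Finset.sum_sub_distrib]
        exact Finset.sum_congr rfl fun i _ => by ring
      calc ℓ w q = ((∑ i, w i * q.1 i) - ∑ i, wstar i * q.1 i - q.2)^2 := by rw [hℓ]; ring
      _ = _ := by rw [hs]; ring
    have hS2 : Integrable (fun x : Fin d → ℝ => (∑ i, (w i - wstar i) * x i)^2) πx :=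
      pi_integrable_sum_sq (integrable_id_gaussian hvx) (integrable_sq_gaussian hvx) _
    have hS : Integrable (fun x : Fin d → ℝ => (-2) * (∑ i, (w i - wstar i) * x i)) πx := by
      refine (integrable_finset_sum _ fun i _ => ?_).const_mul (-2)
      exact (pi_integrable_coord (μ := γx) i (integrable_id_gaussian hvx)).const_mul _
    have h1 : Integrable (fun q : (Fin d → ℝ) × ℝ => (∑ i, (w i - wstar i) * q.1 i)^2)
        (πx.prod γε) := by
      have := hS2.mul_prod (integrable_const (1:ℝ) (μ := γε))
      simpa using this
    have h2 : Integrable (fun q : (Fin d → ℝ) × ℝ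
        => ((-2) * (∑ i, (w i - wstar i) * q.1 i)) * q.2) (πx.prod γε) :=
      hS.mul_prod (integrable_id_gaussian hvε)
    have h3 : Integrable (fun q : (Fin d → ℝ) × ℝ => q.2^2) (πx.prod γε) := by
      have := (integrable_const (1:ℝ) (μ := πx)).mul_prod (integrable_sq_gaussian hvε)
      simpa using this
    calc ∫ q, ℓ w q ∂(πx.prod γε)
        = ∫ q : (Fin d → ℝ) × ℝ, ((∑ i, (w i - wstar i) * q.1 i)^2
          + ((-2) * (∑ i, (w i - wstar i) * q.1 i)) * q.2 + q.2^2) ∂(πx.prod γε) := by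
          exact integral_congr_ae (Filter.Eventually.of_forall fun q => hpt q)
      _ = (∫ q : (Fin d → ℝ) × ℝ, (∑ i, (w i - wstar i) * q.1 i)^2 ∂(πx.prod γε))
          + (∫ q : (Fin d → ℝ) × ℝ, ((-2) * (∑ i, (w i - wstar i) * q.1 i)) * q.2 ∂(πx.prod γε))
          + ∫ q : (Fin d → ℝ) × ℝ, q.2^2 ∂(πx.prod γε) := by
          have h12 : Integrable (fun q : (Fin d → ℝ) × ℝ => (∑ i, (w i - wstar i) * q.1 i)^2
            + ((-2) * (∑ i, (w i - wstar i) * q.1 i)) * q.2) (πx.prod γε) := h1.add h2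
          rw [integral_add h12 h3, integral_add h1 h2]
      _ = σx^2 * (∑ i, (w i - wstar i)^2) + σε^2 := by
          have e1 := integral_fun_fst (μ := πx) (ν := γε)
            (f := fun x : Fin d → ℝ => (∑ i, (w i - wstar i) * x i)^2)
          have e2 := integral_prod_mul (μ := πx) (ν := γε)
            (fun x : Fin d → ℝ => (-2) * (∑ i, (w i - wstar i) * x i)) (fun e : ℝ => e)
          have e3 := integral_fun_snd (μ := πx) (ν := γε) (f := fun e : ℝ => e^2)
          rw [probReal_univ] at e1 e3
          simp only [ENNReal.toReal_one, one_smul] at e1 e3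
          rw [pi_integral_sum_sq (integrable_id_gaussian hvx) (integrable_sq_gaussian hvx)
            (integral_id_gaussian hvx) (integral_sq_gaussian hvx) _] at e1
          rw [integral_id_gaussian hvε, mul_zero] at e2
          rw [integral_sq_gaussian hvε] at e3
          simp only [e1, e2, e3]
          ring
  -- Step C: integral over the prior
  have hEint : ∀ i : Fin d, Integrable (fun z : ℝ => Real.exp (σx^2*(z - wstar i)^2)) γπ :=
    fun i => integrable_exp_sq_gaussian hvπ (wstar i) ht
  have hptw : ∀ w : Fin d → ℝ, Real.exp (σx^2 * (∑ i, (w i - wstar i)^2) + σε^2)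
      = (∏ i, Real.exp (σx^2 * (w i - wstar i)^2)) * Real.exp (σε^2) := by
    intro w
    rw [← Real.exp_sum, ← Real.exp_add, Finset.mul_sum]
  have hexpFint : Integrable (fun w : Fin d → ℝ =>
      Real.exp (σx^2 * (∑ i, (w i - wstar i)^2) + σε^2)) πp := by
    refine ((pi_integrable_prod (μ := γπ)
      (f := fun i => fun z => Real.exp (σx^2*(z - wstar i)^2)) hEint).mul_const
      (Real.exp (σε^2))).congr (Filter.Eventually.of_forall fun w => (hptw w).symm)
  have hYval : ∫ w, Real.exp (σx^2 * (∑ i, (w i - wstar i)^2) + σε^2) ∂πp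
      = (∏ _i : Fin d, (Real.exp (σx^2*(wstar _i)^2/(1-2*σx^2*σπ^2))
          / Real.sqrt (1-2*σx^2*σπ^2))) * Real.exp (σε^2) := by
    rw [integral_congr_ae (Filter.Eventually.of_forall fun w => hptw w)]
    rw [integral_mul_const, pi_integral_prod (μ := γπ)
      (fun i => fun z => Real.exp (σx^2*(z - wstar i)^2))]
    congr 1
    exact Finset.prod_congr rfl fun i _ => integral_exp_sq_gaussian hvπ (wstar i) ht
  -- Step D: comparison
  have hG : Integrable (fun p : (Fin d → ℝ) × ((Fin d → ℝ) × ℝ)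
      => Real.exp (∫ q, ℓ p.1 q ∂(πx.prod γε))) (πp.prod (πx.prod γε)) := by
    have h := hexpFint.mul_prod (integrable_const (1:ℝ) (μ := πx.prod γε))
    refine h.congr (Filter.Eventually.of_forall fun p => ?_)
    simp only [mul_one]
    rw [key2 p.1]
  have hmono : (∫ p : (Fin d → ℝ) × ((Fin d → ℝ) × ℝ),
        Real.exp ((∫ q, ℓ p.1 q ∂(πx.prod γε)) - ℓ p.1 p.2) ∂(πp.prod (πx.prod γε)))
      ≤ ∫ p : (Fin d → ℝ) × ((Fin d → ℝ) × ℝ),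
        Real.exp (∫ q, ℓ p.1 q ∂(πx.prod γε)) ∂(πp.prod (πx.prod γε)) := by
    refine integral_mono_of_nonneg (Filter.Eventually.of_forall fun p => (Real.exp_pos _).le)
      hG (Filter.Eventually.of_forall fun p => ?_)
    refine Real.exp_le_exp.mpr (sub_le_self _ ?_)
    rw [hℓ]
    positivity
  have hfst : (∫ p : (Fin d → ℝ) × ((Fin d → ℝ) × ℝ),
        Real.exp (∫ q, ℓ p.1 q ∂(πx.prod γε)) ∂(πp.prod (πx.prod γε)))
      = ∫ w, Real.exp (∫ q, ℓ w q ∂(πx.prod γε)) ∂πp := by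
    have h := integral_fun_fst (μ := πp) (ν := πx.prod γε)
      (f := fun w => Real.exp (∫ q, ℓ w q ∂(πx.prod γε)))
    rw [probReal_univ] at h
    simpa using h
  have hYeq : (∫ w, Real.exp (∫ q, ℓ w q ∂(πx.prod γε)) ∂πp)
      = ∫ w, Real.exp (σx^2 * (∑ i, (w i - wstar i)^2) + σε^2) ∂πp :=
    integral_congr_ae (Filter.Eventually.of_forall fun w => congrArg Real.exp (key2 w))
  have hY1 : 1 ≤ ∫ w, Real.exp (σx^2 * (∑ i, (w i - wstar i)^2) + σε^2) ∂πp := by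
    have h0 : ∫ _w : Fin d → ℝ, (1:ℝ) ∂πp = 1 := by simp [measure_univ]
    rw [← h0]
    exact integral_mono (integrable_const 1) hexpFint fun w => Real.one_le_exp (by positivity)
  have hlog : Real.log (∫ p : (Fin d → ℝ) × ((Fin d → ℝ) × ℝ),
        Real.exp ((∫ q, ℓ p.1 q ∂(πx.prod γε)) - ℓ p.1 p.2) ∂(πp.prod (πx.prod γε)))
      ≤ Real.log (∫ w, Real.exp (σx^2 * (∑ i, (w i - wstar i)^2) + σε^2) ∂πp) := by
    have hIle := hmono.trans (le_of_eq (hfst.trans hYeq))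
    have hI0 : (0:ℝ) ≤ ∫ p : (Fin d → ℝ) × ((Fin d → ℝ) × ℝ),
        Real.exp ((∫ q, ℓ p.1 q ∂(πx.prod γε)) - ℓ p.1 p.2) ∂(πp.prod (πx.prod γε)) :=
      integral_nonneg fun p => (Real.exp_pos _).le
    rcases hI0.eq_or_lt with h | h
    · rw [← h, Real.log_zero]
      exact Real.log_nonneg hY1
    · exact Real.log_le_log h hIle
  refine hlog.trans ?_
  rw [hYval]
  -- compute the logarithm
  set D : ℝ := 1 - 2*σx^2*σπ^2 with hDdef
  set A : ℝ := ∑ i, (wstar i)^2 with hAdef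
  have hsqrtD : (0:ℝ) < Real.sqrt D := Real.sqrt_pos.mpr hD
  have hprodval : (∏ _i : Fin d, (Real.exp (σx^2*(wstar _i)^2/D) / Real.sqrt D))
      = Real.exp (σx^2*A/D) * ((Real.sqrt D)⁻¹)^d := by
    rw [Finset.prod_div_distrib, Finset.prod_const, Finset.card_univ, Fintype.card_fin,
      ← Real.exp_sum, div_eq_mul_inv, ← inv_pow]
    congr 2
    rw [hAdef, Finset.mul_sum, Finset.sum_div]
  rw [hprodval]
  rw [Real.log_mul (by positivity) (Real.exp_ne_zero _),
    Real.log_mul (Real.exp_ne_zero _) (by positivity),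
    Real.log_exp, Real.log_exp, Real.log_pow, Real.log_inv, Real.log_sqrt hD.le]
  -- now pure arithmetic
  have hlogD' : (-Real.log D) * D ≤ 1 - D := by
    have h1 := Real.log_le_sub_one_of_pos (inv_pos.mpr hD)
    rw [Real.log_inv] at h1
    calc (-Real.log D)*D ≤ (D⁻¹ - 1)*D := mul_le_mul_of_nonneg_right h1 hD.le
    _ = 1 - D := by field_simp
  have hdd : (0:ℝ) ≤ (d:ℝ) := Nat.cast_nonneg d
  have hrhs : 2 * (σx ^ 2 * (σπ ^ 2 * d + A) + σε ^ 2 * D) / (2 * D)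
      = σx^2*σπ^2*(d:ℝ)/D + σx^2*A/D + σε^2 := by
    field_simp
  rw [hrhs]
  have hkey : (d:ℝ) * (-(Real.log D / 2)) ≤ σx^2*σπ^2*(d:ℝ)/D := by
    rw [le_div_iff₀ hD]
    have h2 := mul_le_mul_of_nonneg_left hlogD' hdd
    have h1D : 1 - D = 2*σx^2*σπ^2 := by rw [hDdef]; ring
    nlinarith [h2]
  linarith [hkey]
end

section
/- In Bayesian linear regression with Gaussian likelihood p(y|x,w) = N(y | w·φ(x), σ²) and prior N(0, σ_π² I), the negative log marginal likelihood decomposes as −ln p(Y|X) = n·E_{w∼ρ*}[L̂_nll(w)] + KL(N(ŵ, A⁻¹) ‖ N(0, σ_π² I)), where ρ* = N(ŵ, A⁻¹) is the Bayesian posterior with A = (1/σ²)ΦᵀΦ + (1/σ_π²)I and ŵ = (1/σ²)A⁻¹Φᵀy, and L̂_nll(w) = (1/(2n))·[n·ln(2πσ²) + (1/σ²)‖y − Φw‖²]. -/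
open MeasureTheory Matrix Real

section AuxGauss

lemma int_exp' : Integrable (fun x : ℝ => Real.exp (-(1/2) * x^2)) :=
  integrable_exp_neg_mul_sq (by norm_num)

lemma int_x_exp' : Integrable (fun x : ℝ => Real.exp (-(1/2) * x^2) * x) := by
  simpa [mul_comm] using integrable_mul_exp_neg_mul_sq (b := 1/2) (by norm_num)

lemma int_x2_exp' : Integrable (fun x : ℝ => Real.exp (-(1/2) * x^2) * (x * x)) := by
  have h := integrable_rpow_mul_exp_neg_mul_sq (b := 1/2) (by norm_num) (s := 2) (by norm_num)
  have he : (fun x : ℝ => x ^ (2:ℝ) * Real.exp (-(1/2) * x ^ 2))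
      = fun x : ℝ => Real.exp (-(1/2) * x^2) * (x * x) := by
    funext x
    rw [show (2:ℝ) = ((2:ℕ):ℝ) by norm_num, Real.rpow_natCast]
    ring
  rwa [he] at h

lemma gauss_prod {d : ℕ} (u : Fin d → ℝ) :
    Real.exp (-(1/2) * (u ⬝ᵥ u)) = ∏ i, Real.exp (-(1/2) * (u i)^2) := by
  rw [← Real.exp_sum]
  congr 1
  rw [dotProduct, Finset.mul_sum]
  exact Finset.sum_congr rfl fun i _ => by ring

lemma gauss_integrable {d : ℕ} :
    Integrable (fun u : Fin d → ℝ => Real.exp (-(1/2) * (u ⬝ᵥ u))) := by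
  simp_rw [gauss_prod]
  exact Integrable.fintype_prod fun _ => int_exp'

lemma gauss_integral {d : ℕ} :
    (∫ u : Fin d → ℝ, Real.exp (-(1/2) * (u ⬝ᵥ u))) = (2 * π) ^ ((d : ℝ) / 2) := by
  simp_rw [gauss_prod]
  rw [MeasureTheory.volume_pi, MeasureTheory.integral_fintype_prod_eq_pow (fun x : ℝ => Real.exp (-(1/2) * x^2))]
  have h1 : (∫ x : ℝ, Real.exp (-(1/2) * x^2)) = Real.sqrt (2 * π) := by
    rw [integral_gaussian (1/2)]
    rw [show π / (1/2:ℝ) = 2 * π by ring]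
  rw [h1, Fintype.card_fin]
  rw [Real.sqrt_eq_rpow, ← Real.rpow_natCast ((2*π) ^ ((1:ℝ)/2)) d,
    ← Real.rpow_mul (by positivity)]
  congr 1
  ring

lemma base2 {d : ℕ} (j k : Fin d) :
    Integrable (fun u : Fin d → ℝ => Real.exp (-(1/2) * (u ⬝ᵥ u)) * (u j * u k)) := by
  have he : (fun u : Fin d → ℝ => Real.exp (-(1/2) * (u ⬝ᵥ u)) * (u j * u k))
      = fun u : Fin d → ℝ => ∏ i, (Real.exp (-(1/2) * (u i)^2)
          * ((if j = i then u i else 1) * (if k = i then u i else 1))) := by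
    funext u
    rw [Finset.prod_mul_distrib, Finset.prod_mul_distrib, Finset.prod_ite_eq,
      Finset.prod_ite_eq, gauss_prod]
    simp
  rw [he]
  refine Integrable.fintype_prod (f := fun i x =>
    Real.exp (-(1/2) * x^2) * ((if j = i then x else 1) * (if k = i then x else 1))) fun i => ?_
  by_cases h1 : j = i <;> by_cases h2 : k = i
  · simpa only [if_pos h1, if_pos h2] using int_x2_exp'
  · simpa only [if_pos h1, if_neg h2, mul_one] using int_x_exp'
  · simpa only [if_neg h1, if_pos h2, one_mul] using int_x_exp'
  · simpa only [if_neg h1, if_neg h2, mul_one] using int_exp'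

lemma base1 {d : ℕ} (j : Fin d) :
    Integrable (fun u : Fin d → ℝ => Real.exp (-(1/2) * (u ⬝ᵥ u)) * u j) := by
  have he : (fun u : Fin d → ℝ => Real.exp (-(1/2) * (u ⬝ᵥ u)) * u j)
      = fun u : Fin d → ℝ => ∏ i, (Real.exp (-(1/2) * (u i)^2)
          * (if j = i then u i else 1)) := by
    funext u
    rw [Finset.prod_mul_distrib, Finset.prod_ite_eq, gauss_prod]
    simp
  rw [he]
  refine Integrable.fintype_prod (f := fun i x =>
    Real.exp (-(1/2) * x^2) * (if j = i then x else 1)) fun i => ?_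
  by_cases h1 : j = i
  · simpa only [if_pos h1] using int_x_exp'
  · simpa only [if_neg h1, mul_one] using int_exp'

lemma lin2_integrable {d : ℕ} (v w : Fin d → ℝ) :
    Integrable (fun u : Fin d → ℝ => Real.exp (-(1/2) * (u ⬝ᵥ u)) * ((v ⬝ᵥ u) * (w ⬝ᵥ u))) := by
  have he : (fun u : Fin d → ℝ => Real.exp (-(1/2) * (u ⬝ᵥ u)) * ((v ⬝ᵥ u) * (w ⬝ᵥ u)))
      = fun u : Fin d → ℝ => ∑ j, ∑ k, (v j * w k)
          * (Real.exp (-(1/2) * (u ⬝ᵥ u)) * (u j * u k)) := by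
    funext u
    rw [show (v ⬝ᵥ u) * (w ⬝ᵥ u) = ∑ j, ∑ k, (v j * u j) * (w k * u k) by
      rw [show v ⬝ᵥ u = ∑ j, v j * u j from rfl, show w ⬝ᵥ u = ∑ k, w k * u k from rfl]
      exact Finset.sum_mul_sum _ _ _ _]
    rw [Finset.mul_sum]
    refine Finset.sum_congr rfl fun j _ => ?_
    rw [Finset.mul_sum]
    exact Finset.sum_congr rfl fun k _ => by ring
  rw [he]
  exact integrable_finset_sum _ fun j _ =>
    integrable_finset_sum _ fun k _ => (base2 j k).const_mul _

lemma lin1_integrable {d : ℕ} (v : Fin d → ℝ) :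
    Integrable (fun u : Fin d → ℝ => Real.exp (-(1/2) * (u ⬝ᵥ u)) * (v ⬝ᵥ u)) := by
  have he : (fun u : Fin d → ℝ => Real.exp (-(1/2) * (u ⬝ᵥ u)) * (v ⬝ᵥ u))
      = fun u : Fin d → ℝ => ∑ j, (v j)
          * (Real.exp (-(1/2) * (u ⬝ᵥ u)) * u j) := by
    funext u
    rw [show v ⬝ᵥ u = ∑ j, v j * u j from rfl, Finset.mul_sum]
    exact Finset.sum_congr rfl fun j _ => by ring
  rw [he]
  exact integrable_finset_sum _ fun j _ => (base1 j).const_mul _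

noncomputable def covEquiv {d : ℕ} (M : Matrix (Fin d) (Fin d) ℝ) (hM : Invertible M)
    (c : Fin d → ℝ) : (Fin d → ℝ) ≃ᵐ (Fin d → ℝ) :=
  (((M.toLinearEquiv' hM).toContinuousLinearEquiv.toHomeomorph.trans
    (Homeomorph.addLeft c)).toMeasurableEquiv)

lemma covEquiv_apply {d : ℕ} (M : Matrix (Fin d) (Fin d) ℝ) (hM : Invertible M)
    (c : Fin d → ℝ) (u : Fin d → ℝ) : covEquiv M hM c u = c + M.mulVec u := by
  simp [covEquiv, Matrix.toLinearEquiv', Matrix.toLin'_apply]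

lemma covEquiv_map {d : ℕ} (M : Matrix (Fin d) (Fin d) ℝ) (hM : Invertible M) (c : Fin d → ℝ) :
    Measure.map (covEquiv M hM c) volume = ENNReal.ofReal |M.det⁻¹| • volume := by
  have h1 : ⇑(covEquiv M hM c) = (fun x => c + x) ∘ ⇑(Matrix.toLin' M) := by
    funext u
    simp [covEquiv_apply, Matrix.toLin'_apply]
  rw [h1, ← Measure.map_map (measurable_const_add c)
    (Matrix.toLin' M).continuous_of_finiteDimensional.measurable]
  rw [Real.map_linearMap_volume_pi_eq_smul_volume_pi
    (by rw [LinearMap.det_toLin']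
        exact ((Matrix.isUnit_iff_isUnit_det M).mp (isUnit_of_invertible M)).ne_zero)]
  rw [Measure.map_smul, map_add_left_eq_self volume c, LinearMap.det_toLin']

lemma cov_integrable {d : ℕ} (M : Matrix (Fin d) (Fin d) ℝ) (hM : Invertible M)
    (c : Fin d → ℝ) (h : (Fin d → ℝ) → ℝ) :
    Integrable h (volume : Measure (Fin d → ℝ)) ↔
      Integrable (fun u => h (c + M.mulVec u)) volume := by
  have hd : M.det ≠ 0 := ((Matrix.isUnit_iff_isUnit_det M).mp (isUnit_of_invertible M)).ne_zero
  rw [show (fun u => h (c + M.mulVec u)) = h ∘ ⇑(covEquiv M hM c) by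
    funext u; simp [covEquiv_apply]]
  rw [← MeasureTheory.integrable_map_equiv, covEquiv_map]
  exact (integrable_smul_measure (by simp [hd]) (by simp)).symm

lemma cov_integral {d : ℕ} (M : Matrix (Fin d) (Fin d) ℝ) (hM : Invertible M)
    (c : Fin d → ℝ) (h : (Fin d → ℝ) → ℝ) :
    ∫ w, h w = |M.det| * ∫ u, h (c + M.mulVec u) := by
  have hd : M.det ≠ 0 := ((Matrix.isUnit_iff_isUnit_det M).mp (isUnit_of_invertible M)).ne_zero
  have h1 : ∫ u, h (c + M.mulVec u) = ∫ w, h w ∂(Measure.map (covEquiv M hM c) volume) := by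
    rw [MeasureTheory.integral_map_equiv]
    simp_rw [covEquiv_apply]
  rw [h1, covEquiv_map, integral_smul_measure, ENNReal.toReal_ofReal (abs_nonneg _)]
  rw [smul_eq_mul, ← mul_assoc, abs_inv]
  field_simp

lemma dot_sub_sub {n : ℕ} (v z : Fin n → ℝ) :
    (v - z) ⬝ᵥ (v - z) = v ⬝ᵥ v - 2*(v ⬝ᵥ z) + z ⬝ᵥ z := by
  rw [dotProduct_sub, sub_dotProduct, sub_dotProduct, dotProduct_comm z v]
  ring

lemma key_quad {n d : ℕ} {σ σπ : ℝ}
    (Φ : Matrix (Fin n) (Fin d) ℝ) (y : Fin n → ℝ)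
    (A : Matrix (Fin d) (Fin d) ℝ)
    (hA : A = (1 / σ ^ 2) • (Φᵀ * Φ) + (1 / σπ ^ 2) • (1 : Matrix (Fin d) (Fin d) ℝ))
    (hAdet : IsUnit A.det)
    (what : Fin d → ℝ)
    (hwhat : what = (1 / σ ^ 2) • A⁻¹.mulVec (Φᵀ.mulVec y)) (w : Fin d → ℝ) :
    (1/(2*σ^2)) * ((y - Φ.mulVec w) ⬝ᵥ (y - Φ.mulVec w)) + (1/(2*σπ^2)) * (w ⬝ᵥ w)
      - (1/2) * ((w - what) ⬝ᵥ A.mulVec (w - what))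
    = (1/(2*σ^2)) * ((y - Φ.mulVec what) ⬝ᵥ (y - Φ.mulVec what))
      + (1/(2*σπ^2)) * (what ⬝ᵥ what) := by
  have hAw : A.mulVec what = (1 / σ ^ 2) • (Φᵀ.mulVec y) := by
    rw [hwhat, mulVec_smul, mulVec_mulVec, Matrix.mul_nonsing_inv A hAdet, one_mulVec]
  have hquad : ∀ v : Fin d → ℝ, v ⬝ᵥ A.mulVec v
      = (1/σ^2) * ((Φ.mulVec v) ⬝ᵥ (Φ.mulVec v)) + (1/σπ^2) * (v ⬝ᵥ v) := by
    intro v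
    rw [hA, add_mulVec, smul_mulVec, smul_mulVec, one_mulVec, dotProduct_add,
      dotProduct_smul, dotProduct_smul, ← mulVec_mulVec, dotProduct_mulVec v Φᵀ,
      vecMul_transpose]
    simp [smul_eq_mul]
  have hcross : ∀ v : Fin d → ℝ, v ⬝ᵥ A.mulVec what = (1/σ^2) * (y ⬝ᵥ Φ.mulVec v) := by
    intro v
    rw [hAw, dotProduct_smul, smul_eq_mul, dotProduct_mulVec v Φᵀ, vecMul_transpose,
      dotProduct_comm]
  have hAT : Aᵀ = A := by
    rw [hA]
    simp [transpose_add, transpose_smul, transpose_mul, transpose_one]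
  have hsym : ∀ v : Fin d → ℝ, what ⬝ᵥ A.mulVec v = v ⬝ᵥ A.mulVec what := by
    intro v
    rw [dotProduct_mulVec, ← mulVec_transpose, hAT, dotProduct_comm]
  have qexpand : (w - what) ⬝ᵥ A.mulVec (w - what)
      = w ⬝ᵥ A.mulVec w - w ⬝ᵥ A.mulVec what - what ⬝ᵥ A.mulVec w + what ⬝ᵥ A.mulVec what := by
    rw [mulVec_sub, dotProduct_sub, sub_dotProduct, sub_dotProduct]
    ring
  have hrel : (1/σ^2) * ((Φ.mulVec what) ⬝ᵥ (Φ.mulVec what)) + (1/σπ^2) * (what ⬝ᵥ what)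
      = (1/σ^2) * (y ⬝ᵥ Φ.mulVec what) := (hquad what).symm.trans (hcross what)
  rw [dot_sub_sub y (Φ.mulVec w), dot_sub_sub y (Φ.mulVec what), qexpand, hquad w, hsym w,
    hcross w, hcross what]
  linear_combination (-(1/2 : ℝ)) * hrel

end AuxGauss

/-- In Bayesian linear regression, the negative log marginal likelihood
decomposes as `n·E_{w∼ρ*}[L̂_nll(w)] + KL(N(ŵ,A⁻¹) ‖ N(0,σ_π²I))`, where
`ρ* = N(ŵ, A⁻¹)` is the Bayesian posterior. -/
theorem stmt_19 (n d : ℕ) (hn : 0 < n) (hd : 0 < d)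
    (σ σπ : ℝ) (hσ : 0 < σ) (hσπ : 0 < σπ)
    (Φ : Matrix (Fin n) (Fin d) ℝ) (y : Fin n → ℝ)
    (A : Matrix (Fin d) (Fin d) ℝ)
    (hA : A = (1 / σ ^ 2) • (Φᵀ * Φ) + (1 / σπ ^ 2) • (1 : Matrix (Fin d) (Fin d) ℝ))
    (hApos : A.PosDef)
    (what : Fin d → ℝ)
    (hwhat : what = (1 / σ ^ 2) • A⁻¹.mulVec (Φᵀ.mulVec y))
    (Lhat : (Fin d → ℝ) → ℝ)
    (hLhat : ∀ w, Lhat w = (1 / (2 * n)) * (n * Real.log (2 * π * σ ^ 2)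
      + (1 / σ ^ 2) * ((y - Φ.mulVec w) ⬝ᵥ (y - Φ.mulVec w))))
    (p q : (Fin d → ℝ) → ℝ)
    (hp : ∀ w, p w = Real.sqrt A.det / (2 * π) ^ ((d : ℝ) / 2) *
      Real.exp (-(1 / 2) * ((w - what) ⬝ᵥ A.mulVec (w - what))))
    (hq : ∀ w, q w = (2 * π * σπ ^ 2) ^ (-(d : ℝ) / 2) *
      Real.exp (-(w ⬝ᵥ w) / (2 * σπ ^ 2))) :
    (1 / (2 * σ ^ 2)) * ((y - Φ.mulVec what) ⬝ᵥ (y - Φ.mulVec what))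
      + ((n : ℝ) / 2) * Real.log (2 * π * σ ^ 2)
      + (1 / (2 * σπ ^ 2)) * (what ⬝ᵥ what)
      + (1 / 2) * Real.log A.det + (d : ℝ) * Real.log σπ
    = (n : ℝ) * (∫ w : Fin d → ℝ, p w * Lhat w
        ∂(Measure.pi fun _ : Fin d => volume))
      + ∫ w : Fin d → ℝ, p w * Real.log (p w / q w)
          ∂(Measure.pi fun _ : Fin d => volume) := by
  rw [← MeasureTheory.volume_pi]
  -- basic positivity facts
  have h2π : (0:ℝ) < 2 * π := by positivity
  have hdetA : 0 < A.det := hApos.det_pos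
  have hsd : 0 < Real.sqrt A.det := Real.sqrt_pos.mpr hdetA
  have hn' : (n:ℝ) ≠ 0 := Nat.cast_ne_zero.mpr hn.ne'
  have hAdet : IsUnit A.det := isUnit_iff_ne_zero.mpr hdetA.ne'
  -- the constant
  set C : ℝ := (1 / (2 * σ ^ 2)) * ((y - Φ.mulVec what) ⬝ᵥ (y - Φ.mulVec what))
      + ((n : ℝ) / 2) * Real.log (2 * π * σ ^ 2)
      + (1 / (2 * σπ ^ 2)) * (what ⬝ᵥ what)
      + (1 / 2) * Real.log A.det + (d : ℝ) * Real.log σπ with hC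
  set K : ℝ := Real.sqrt A.det / (2 * π) ^ ((d : ℝ) / 2) with hK
  -- pointwise identity
  have hpw : ∀ w, 0 < p w := by
    intro w
    rw [hp]
    positivity
  have hqw : ∀ w, 0 < q w := by
    intro w
    rw [hq]
    positivity
  have hlogp : ∀ w, Real.log (p w) = (1/2) * Real.log A.det - ((d:ℝ)/2) * Real.log (2*π)
      - (1/2) * ((w - what) ⬝ᵥ A.mulVec (w - what)) := by
    intro w
    rw [hp, Real.log_mul (by positivity) (Real.exp_ne_zero _), Real.log_exp,
      Real.log_div hsd.ne' (by positivity), Real.log_sqrt hdetA.le, Real.log_rpow h2π]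
    ring
  have hlogq : ∀ w, Real.log (q w) = (-(d:ℝ)/2) * (Real.log (2*π) + 2 * Real.log σπ)
      - (w ⬝ᵥ w)/(2*σπ^2) := by
    intro w
    rw [hq, Real.log_mul (by positivity) (Real.exp_ne_zero _), Real.log_exp,
      Real.log_rpow (by positivity), Real.log_mul h2π.ne' (by positivity), Real.log_pow]
    push_cast
    ring
  have hL2 : ∀ w, (n:ℝ) * Lhat w = ((n:ℝ)/2) * Real.log (2*π*σ^2)
      + (1/(2*σ^2)) * ((y - Φ.mulVec w) ⬝ᵥ (y - Φ.mulVec w)) := by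
    intro w
    rw [hLhat]
    field_simp
  have stepA : ∀ w, (n:ℝ) * (p w * Lhat w) + p w * Real.log (p w / q w) = C * p w := by
    intro w
    have hsum : (n:ℝ) * Lhat w + (Real.log (p w) - Real.log (q w)) = C := by
      rw [hL2, hlogp, hlogq, hC]
      linear_combination key_quad Φ y A hA hAdet what hwhat w
    rw [Real.log_div (hpw w).ne' (hqw w).ne']
    linear_combination (p w) * hsum
  -- square root of A
  set B : Matrix (Fin d) (Fin d) ℝ := (open scoped MatrixOrder in CFC.sqrt A) with hB
  have hBB : B * B = A := by
    open scoped MatrixOrder in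
    exact CFC.sqrt_mul_sqrt_self A (Matrix.nonneg_iff_posSemidef.mpr hApos.posSemidef)
  have hdet2 : B.det * B.det = A.det := by rw [← Matrix.det_mul, hBB]
  have hdetB : B.det ≠ 0 := by
    intro h
    rw [h, mul_zero] at hdet2
    exact hdetA.ne' hdet2.symm
  have hBT : Bᵀ = B := by
    rw [← Matrix.conjTranspose_eq_transpose_of_trivial]
    open scoped MatrixOrder in
    exact (CFC.sqrt_nonneg A).posSemidef.1
  have hdetBi : (B⁻¹).det ≠ 0 := by
    rw [Matrix.det_nonsing_inv, Ring.inverse_eq_inv']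
    exact inv_ne_zero hdetB
  have hBinv' : Invertible (B⁻¹) := (B⁻¹).invertibleOfIsUnitDet (isUnit_iff_ne_zero.mpr hdetBi)
  -- quadratic form via B
  have hQB : ∀ v : Fin d → ℝ, v ⬝ᵥ A.mulVec v = (B.mulVec v) ⬝ᵥ (B.mulVec v) := by
    intro v
    rw [← hBB, ← mulVec_mulVec, dotProduct_mulVec v B]
    congr 1
    conv_lhs => rw [← hBT]
    rw [vecMul_transpose]
  -- the substitution
  have hBBi : ∀ u : Fin d → ℝ, B.mulVec (B⁻¹.mulVec u) = u := by
    intro u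
    rw [mulVec_mulVec, Matrix.mul_nonsing_inv B (isUnit_iff_ne_zero.mpr hdetB), one_mulVec]
  have pe : ∀ u : Fin d → ℝ, p (what + B⁻¹.mulVec u) = K * Real.exp (-(1/2) * (u ⬝ᵥ u)) := by
    intro u
    rw [hp, show what + B⁻¹.mulVec u - what = B⁻¹.mulVec u by abel, hQB, hBBi]
  -- integral of p is 1
  have hintp : Integrable p := by
    rw [cov_integrable B⁻¹ hBinv' what p]
    have : (fun u : Fin d → ℝ => p (what + B⁻¹.mulVec u))
        = fun u : Fin d → ℝ => K * Real.exp (-(1/2) * (u ⬝ᵥ u)) := funext pe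
    rw [this]
    exact gauss_integrable.const_mul K
  have hintegralp : (∫ w : Fin d → ℝ, p w) = 1 := by
    rw [cov_integral B⁻¹ hBinv' what p]
    have : (fun u : Fin d → ℝ => p (what + B⁻¹.mulVec u))
        = fun u : Fin d → ℝ => K * Real.exp (-(1/2) * (u ⬝ᵥ u)) := funext pe
    simp_rw [this]
    rw [MeasureTheory.integral_const_mul, gauss_integral, Matrix.det_nonsing_inv, Ring.inverse_eq_inv', abs_inv, hK]
    have hsqd : Real.sqrt A.det = |B.det| := by
      rw [← hdet2, Real.sqrt_mul_self_eq_abs]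
    rw [hsqd]
    have hR : (0:ℝ) < (2 * π) ^ ((d : ℝ) / 2) := by positivity
    field_simp
  -- integrability of p * Lhat
  have hintf : Integrable (fun w => p w * Lhat w) := by
    rw [cov_integrable B⁻¹ hBinv' what]
    set N : Matrix (Fin n) (Fin d) ℝ := Φ * B⁻¹ with hN
    set r : Fin n → ℝ := y - Φ.mulVec what with hr
    have him : ∀ u : Fin d → ℝ, y - Φ.mulVec (what + B⁻¹.mulVec u) = r - N.mulVec u := by
      intro u
      rw [mulVec_add, mulVec_mulVec, hr, hN, sub_add_eq_sub_sub]
    have hlin : ∀ u : Fin d → ℝ, r ⬝ᵥ N.mulVec u = (Nᵀ.mulVec r) ⬝ᵥ u := by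
      intro u
      rw [dotProduct_mulVec, mulVec_transpose]
    have hsq : ∀ u : Fin d → ℝ, (N.mulVec u) ⬝ᵥ (N.mulVec u)
        = ∑ i, (N i ⬝ᵥ u) * (N i ⬝ᵥ u) := fun u => rfl
    have hgoal : (fun u : Fin d → ℝ => p (what + B⁻¹.mulVec u) * Lhat (what + B⁻¹.mulVec u))
        = fun u : Fin d → ℝ =>
          (K * ((1/(2*(n:ℝ))) * ((n:ℝ) * Real.log (2*π*σ^2)
              + (1/σ^2) * (r ⬝ᵥ r)))) * Real.exp (-(1/2) * (u ⬝ᵥ u))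
          + (K * (1/(2*(n:ℝ))) * (1/σ^2) * (-2))
              * (Real.exp (-(1/2) * (u ⬝ᵥ u)) * ((Nᵀ.mulVec r) ⬝ᵥ u))
          + (K * (1/(2*(n:ℝ))) * (1/σ^2))
              * (∑ i, Real.exp (-(1/2) * (u ⬝ᵥ u)) * ((N i ⬝ᵥ u) * (N i ⬝ᵥ u))) := by
      funext u
      rw [pe, hLhat, him, dot_sub_sub, hlin, hsq, ← Finset.mul_sum]
      ring
    rw [hgoal]
    exact ((gauss_integrable.const_mul _).add ((lin1_integrable _).const_mul _)).add
      ((integrable_finset_sum _ fun i _ => lin2_integrable (N i) (N i)).const_mul _)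
  -- assemble
  have hgform : (fun w => p w * Real.log (p w / q w))
      = fun w => C * p w - (n:ℝ) * (p w * Lhat w) := by
    funext w
    linear_combination stepA w
  rw [hgform, MeasureTheory.integral_sub (hintp.const_mul C) (hintf.const_mul _),
    MeasureTheory.integral_const_mul, MeasureTheory.integral_const_mul, hintegralp, mul_one]
  ring
end
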